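/- Under the same asymptotic exponential tightness assumption with compact $\mathcal{K}_l \subset \mathcal{P}(X)$ and compact $K_{l,\varepsilon} \subset X$ with $\nu(K_{l,\varepsilon}^C) < \varepsilon$ for all $\nu \in \mathcal{K}_l$, the rate function $I(\sigma) = \sup_{V\in C_b(X)}(\langle V,\sigma\rangle - \Lambda(V))$ satisfies $I(\sigma) \ge (\sigma(K_{l,\varepsilon}^C) - \varepsilon) \cdot l$ for every $\sigma \in \mathcal{P}(X)$ and all $l, \varepsilon > 0$. -/

import Mathlib

open MeasureTheory BoundedContinuousFunction
open Metric Filter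
open scoped ENNReal

/-- Given the pressure bound `Λ(V) ≤ max{(1-ε) sup_K V + ε sup_X V, sup_X V - l}` for all
`V ∈ C_b(X)` (a consequence of asymptotic exponential tightness), the rate function
`I(σ) = sup_V (⟨V,σ⟩ - Λ(V))` satisfies `I(σ) ≥ (σ(Kᶜ) - ε)·l` for every `σ ∈ P(X)`. -/
theorem rate_function_lower_bound_of_pressure_bound {X : Type*} [MetricSpace X]
    [PolishSpace X] [MeasurableSpace X] [BorelSpace X]
    (Λ : (X →ᵇ ℝ) → ℝ)
    (l : ℝ) (hl : 0 < l) (ε : ℝ) (hε : 0 < ε)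
    (K : Set X) (hK : IsCompact K) (hKne : K.Nonempty)
    (hΛ : ∀ V : X →ᵇ ℝ,
      Λ V ≤ max ((1 - ε) * sSup (V '' K) + ε * ⨆ x, V x) ((⨆ x, V x) - l)) :
    ∀ σ : ProbabilityMeasure X,
      (((((σ : Measure X) Kᶜ).toReal - ε) * l : ℝ) : EReal)
        ≤ ⨆ V : X →ᵇ ℝ, (((∫ x, V x ∂(σ : Measure X)) - Λ V : ℝ) : EReal) := by
  intro σ
  have hXne : Nonempty X := ⟨hKne.choose⟩
  have hKc : IsClosed K := hK.isClosed
  set μ : Measure X := (σ : Measure X) with hμ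
  set S : EReal := ⨆ V : X →ᵇ ℝ, (((∫ x, V x ∂μ) - Λ V : ℝ) : EReal) with hS
  set c : ℝ := ((μ Kᶜ).toReal - ε) * l with hc
  have key : ∀ δ : ℝ, 0 < δ → ((c - δ : ℝ) : EReal) ≤ S := by
    intro δ hδ
    -- choose r > 0 with μ (thickening r K) ≤ μ K + δ/l
    obtain ⟨r, hr, hrK⟩ :
        ∃ r > 0, (μ (thickening r K)).toReal ≤ (μ K).toReal + δ / l := by
      have hfin : ∃ R > 0, μ (thickening R K) ≠ ∞ := ⟨1, one_pos, measure_ne_top μ _⟩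
      have h1 : Tendsto (fun r => μ (thickening r K)) (nhdsWithin 0 (Set.Ioi 0))
          (nhds (μ K)) := tendsto_measure_thickening_of_isClosed hfin hKc
      have h2 : Tendsto (fun r => (μ (thickening r K)).toReal)
          (nhdsWithin 0 (Set.Ioi 0)) (nhds (μ K).toReal) :=
        (ENNReal.tendsto_toReal (measure_ne_top μ _)).comp h1
      have h3 : ∀ᶠ r in nhdsWithin 0 (Set.Ioi 0),
          (μ (thickening r K)).toReal ≤ (μ K).toReal + δ / l :=
        h2.eventually_le_const (lt_add_of_pos_right _ (div_pos hδ hl))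
      obtain ⟨r, hr1, hr2⟩ := (h3.and self_mem_nhdsWithin).exists
      exact ⟨r, hr2, hr1⟩
    -- construct V
    have hcont : Continuous fun x => (l / r) * min (infDist x K) r :=
      continuous_const.mul ((continuous_infDist_pt K).min continuous_const)
    have hlr : 0 ≤ l / r := le_of_lt (by positivity)
    have hV0 : ∀ x, 0 ≤ (l / r) * min (infDist x K) r :=
      fun x => mul_nonneg hlr (le_min (infDist_nonneg) hr.le)
    have hVl : ∀ x, (l / r) * min (infDist x K) r ≤ l := by
      intro x
      calc (l / r) * min (infDist x K) r ≤ (l / r) * r :=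
            mul_le_mul_of_nonneg_left (min_le_right _ _) hlr
        _ = l := div_mul_cancel₀ l hr.ne'
    set V : X →ᵇ ℝ := BoundedContinuousFunction.mkOfBound ⟨_, hcont⟩ l
      (fun x y => by
        rw [Real.dist_eq]
        rw [abs_sub_le_iff]
        simp only [ContinuousMap.coe_mk]
        constructor
        · linarith [hVl x, hV0 y]
        · linarith [hVl y, hV0 x]) with hVdef
    have hVx : ∀ x, V x = (l / r) * min (infDist x K) r := fun x => rfl
    -- V = 0 on K
    have hVK : ∀ x ∈ K, V x = 0 := by
      intro x hx
      rw [hVx, infDist_zero_of_mem hx, min_eq_left hr.le, mul_zero]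
    -- sup over K
    have hsupK : sSup (V '' K) = 0 := by
      have : V '' K = {0} := by
        apply Set.eq_singleton_iff_nonempty_unique_mem.mpr
        exact ⟨⟨V hKne.choose, Set.mem_image_of_mem _ hKne.choose_spec⟩,
          fun y ⟨x, hx, hxy⟩ => hxy ▸ hVK x hx⟩
      rw [this, csSup_singleton]
    -- sup over X
    have hsupX : (⨆ x, V x) ≤ l := ciSup_le fun x => hVl x
    have hΛV : Λ V ≤ ε * l := by
      refine (hΛ V).trans (max_le ?_ ?_)
      · rw [hsupK]
        have : ε * (⨆ x, V x) ≤ ε * l := mul_le_mul_of_nonneg_left hsupX hε.le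
        linarith
      · nlinarith
    -- integral lower bound
    have hint : Integrable (fun x => V x) μ := V.integrable μ
    have hSc : MeasurableSet (thickening r K)ᶜ := (isOpen_thickening.measurableSet).compl
    have hVT : ∀ x ∈ (thickening r K)ᶜ, V x = l := by
      intro x hx
      have : ¬ infDist x K < r := fun h => hx ((mem_thickening_iff_infDist_lt hKne).mpr h)
      rw [hVx, min_eq_right (not_lt.mp this), div_mul_cancel₀ l hr.ne']
    have hintlb : l * (μ (thickening r K)ᶜ).toReal ≤ ∫ x, V x ∂μ := by
      have h1 : ∫ x in (thickening r K)ᶜ, V x ∂μ ≤ ∫ x, V x ∂μ :=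
        setIntegral_le_integral hint (Filter.Eventually.of_forall hV0)
      have h2 : ∫ x in (thickening r K)ᶜ, (l : ℝ) ∂μ = (μ (thickening r K)ᶜ).toReal * l := by
        rw [setIntegral_const, smul_eq_mul]; rfl
      have h3 : ∫ x in (thickening r K)ᶜ, (l : ℝ) ∂μ ≤ ∫ x in (thickening r K)ᶜ, V x ∂μ := by
        apply setIntegral_mono_on (integrableOn_const (measure_ne_top μ _))
          (hint.integrableOn) hSc
        intro x hx; rw [hVT x hx]
      calc l * (μ (thickening r K)ᶜ).toReal = ∫ x in (thickening r K)ᶜ, (l : ℝ) ∂μ := by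
            rw [h2]; ring
        _ ≤ ∫ x, V x ∂μ := h3.trans h1
    -- measure arithmetic
    have hmc : (μ (thickening r K)ᶜ).toReal ≥ (μ Kᶜ).toReal - δ / l := by
      haveI hprob : IsProbabilityMeasure μ := σ.2
      have e1 : (μ Kᶜ).toReal = 1 - (μ K).toReal := by
        rw [measure_compl hKc.measurableSet (measure_ne_top μ _), measure_univ,
          ENNReal.toReal_sub_of_le prob_le_one ENNReal.one_ne_top, ENNReal.toReal_one]
      have e2 : (μ (thickening r K)ᶜ).toReal = 1 - (μ (thickening r K)).toReal := by
        rw [measure_compl isOpen_thickening.measurableSet (measure_ne_top μ _), measure_univ,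
          ENNReal.toReal_sub_of_le prob_le_one ENNReal.one_ne_top, ENNReal.toReal_one]
      rw [e1, e2]; linarith
    -- combine
    have hfinal : c - δ ≤ (∫ x, V x ∂μ) - Λ V := by
      have : l * ((μ Kᶜ).toReal - δ / l) ≤ ∫ x, V x ∂μ := by
        refine le_trans ?_ hintlb
        exact mul_le_mul_of_nonneg_left hmc hl.le
      have hdl : l * (δ / l) = δ := by field_simp
      rw [hc]; nlinarith
    calc ((c - δ : ℝ) : EReal) ≤ (((∫ x, V x ∂μ) - Λ V : ℝ) : EReal) := by
          exact_mod_cast hfinal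
      _ ≤ S := le_iSup (fun V : X →ᵇ ℝ => (((∫ x, V x ∂μ) - Λ V : ℝ) : EReal)) V
  -- limit argument
  have htend : Tendsto (fun n : ℕ => ((c - 1 / (n + 1) : ℝ) : EReal)) atTop (nhds (c : EReal)) := by
    have h1 : Tendsto (fun n : ℕ => (c - 1 / (n + 1) : ℝ)) atTop (nhds c) := by
      have := tendsto_one_div_add_atTop_nhds_zero_nat (𝕜 := ℝ)
      simpa using (tendsto_const_nhds (x := c)).sub this
    exact (continuous_coe_real_ereal.tendsto c).comp h1
  refine le_of_tendsto htend (Eventually.of_forall fun n => key _ (by positivity))
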